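/- Under the same hypotheses, for every ε ∈ (0,1): ‖u_{x_i}‖_{C([0,T]×H̄)} ≤ ε ‖u‖_{C^{2+α}_s([0,T]×H̄)} + C ε^{-m} ‖u‖_{C([0,T]×H̄)} for each 1 ≤ i ≤ d, where m = m(d,α) and C = C(T,R,d,α). -/

import Mathlib

/-- The cycloidal distance. -/
noncomputable def cyc (d : ℕ) (P Q : ℝ × (Fin (d + 1) → ℝ)) : ℝ :=
  (∑ i, |P.2 i - Q.2 i|) /
      (Real.sqrt (P.2 (Fin.last d)) + Real.sqrt (Q.2 (Fin.last d)) +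
        Real.sqrt (∑ i : Fin d, |P.2 i.castSucc - Q.2 i.castSucc|)) +
    Real.sqrt |P.1 - Q.1|

/-- The closed space-time domain `[0,T] × H̄`. -/
def domT (d : ℕ) (T : ℝ) : Set (ℝ × (Fin (d + 1) → ℝ)) :=
  {P | P.1 ∈ Set.Icc 0 T ∧ 0 ≤ P.2 (Fin.last d)}

/-- Sup norm of `f` over a set `S`. -/
noncomputable def supN (d : ℕ) (S : Set (ℝ × (Fin (d + 1) → ℝ)))
    (f : ℝ × (Fin (d + 1) → ℝ) → ℝ) : ℝ :=
  sSup ((fun P => |f P|) '' S)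

/-- Cycloidal Hölder seminorm of exponent `α` of `f` over a set `S`. -/
noncomputable def semiS (d : ℕ) (α : ℝ) (S : Set (ℝ × (Fin (d + 1) → ℝ)))
    (f : ℝ × (Fin (d + 1) → ℝ) → ℝ) : ℝ :=
  sSup ((fun PQ : (ℝ × (Fin (d + 1) → ℝ)) × (ℝ × (Fin (d + 1) → ℝ)) =>
    |f PQ.1 - f PQ.2| / (cyc d PQ.1 PQ.2) ^ α) '' (S ×ˢ S))

/-- Cycloidal Hölder norm `‖f‖_{C^α_s(S)}`. -/
noncomputable def holderS (d : ℕ) (α : ℝ) (S : Set (ℝ × (Fin (d + 1) → ℝ)))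
    (f : ℝ × (Fin (d + 1) → ℝ) → ℝ) : ℝ :=
  supN d S f + semiS d α S f

/-- The Daskalopoulos–Hamilton–Koch norm `‖u‖_{C^{2+α}_s(S)}`, expressed in terms
of `u`, its time derivative `ut`, spatial first derivatives `ux i`, and spatial
second derivatives `uxx i j`. -/
noncomputable def norm2S (d : ℕ) (α : ℝ) (S : Set (ℝ × (Fin (d + 1) → ℝ)))
    (u ut : ℝ × (Fin (d + 1) → ℝ) → ℝ)
    (ux : Fin (d + 1) → ℝ × (Fin (d + 1) → ℝ) → ℝ)
    (uxx : Fin (d + 1) → Fin (d + 1) → ℝ × (Fin (d + 1) → ℝ) → ℝ) : ℝ :=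
  holderS d α S u + holderS d α S ut + (⨆ i, holderS d α S (ux i)) +
    ⨆ i, ⨆ j, holderS d α S (fun P => P.2 (Fin.last d) * uxx i j P)

/-- Finiteness (boundedness) of all the quantities entering `norm2S`. -/
def FinNorm2 (d : ℕ) (α : ℝ) (S : Set (ℝ × (Fin (d + 1) → ℝ)))
    (u ut : ℝ × (Fin (d + 1) → ℝ) → ℝ)
    (ux : Fin (d + 1) → ℝ × (Fin (d + 1) → ℝ) → ℝ)
    (uxx : Fin (d + 1) → Fin (d + 1) → ℝ × (Fin (d + 1) → ℝ) → ℝ) : Prop :=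
  (BddAbove ((fun P => |u P|) '' S) ∧
    BddAbove ((fun PQ : (ℝ × (Fin (d + 1) → ℝ)) × (ℝ × (Fin (d + 1) → ℝ)) =>
      |u PQ.1 - u PQ.2| / (cyc d PQ.1 PQ.2) ^ α) '' (S ×ˢ S))) ∧
  (BddAbove ((fun P => |ut P|) '' S) ∧
    BddAbove ((fun PQ : (ℝ × (Fin (d + 1) → ℝ)) × (ℝ × (Fin (d + 1) → ℝ)) =>
      |ut PQ.1 - ut PQ.2| / (cyc d PQ.1 PQ.2) ^ α) '' (S ×ˢ S))) ∧
  (∀ i, BddAbove ((fun P => |ux i P|) '' S) ∧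
    BddAbove ((fun PQ : (ℝ × (Fin (d + 1) → ℝ)) × (ℝ × (Fin (d + 1) → ℝ)) =>
      |ux i PQ.1 - ux i PQ.2| / (cyc d PQ.1 PQ.2) ^ α) '' (S ×ˢ S))) ∧
  (∀ i j, BddAbove ((fun P => |P.2 (Fin.last d) * uxx i j P|) '' S) ∧
    BddAbove ((fun PQ : (ℝ × (Fin (d + 1) → ℝ)) × (ℝ × (Fin (d + 1) → ℝ)) =>
      |PQ.1.2 (Fin.last d) * uxx i j PQ.1 - PQ.2.2 (Fin.last d) * uxx i j PQ.2| /
        (cyc d PQ.1 PQ.2) ^ α) '' (S ×ˢ S)))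

/-- `ut`, `ux`, `uxx` really are the (one-sided, within the domain) time
derivative, first and second spatial partial derivatives of `u` on `[0,T] × H̄`. -/
def IsDerivs (d : ℕ) (T : ℝ) (u ut : ℝ × (Fin (d + 1) → ℝ) → ℝ)
    (ux : Fin (d + 1) → ℝ × (Fin (d + 1) → ℝ) → ℝ)
    (uxx : Fin (d + 1) → Fin (d + 1) → ℝ × (Fin (d + 1) → ℝ) → ℝ) : Prop :=
  (∀ P ∈ domT d T, HasDerivWithinAt (fun τ => u (τ, P.2)) (ut P) (Set.Icc 0 T) P.1) ∧
  (∀ P ∈ domT d T, ∀ i, HasDerivWithinAt (fun s => u (P.1, Function.update P.2 i s))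
      (ux i P) {s : ℝ | 0 ≤ Function.update P.2 i s (Fin.last d)} (P.2 i)) ∧
  (∀ P ∈ domT d T, ∀ i j, HasDerivWithinAt (fun s => ux i (P.1, Function.update P.2 j s))
      (uxx i j P) {s : ℝ | 0 ≤ Function.update P.2 j s (Fin.last d)} (P.2 j))

/-- `u` has (spatial) compact support in the closed Euclidean ball `B̄_R(x⁰)`. -/
def SuppBall (d : ℕ) (R : ℝ) (x0 : Fin (d + 1) → ℝ)
    (u : ℝ × (Fin (d + 1) → ℝ) → ℝ) : Prop :=
  ∀ P : ℝ × (Fin (d + 1) → ℝ), R < Real.sqrt (∑ i, (P.2 i - x0 i) ^ 2) → u P = 0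


section Aux

open Real Set

lemma cyc_nonneg (d : ℕ) (P Q : ℝ × (Fin (d + 1) → ℝ)) : 0 ≤ cyc d P Q := by
  unfold cyc
  have h1 : (0:ℝ) ≤ ∑ i, |P.2 i - Q.2 i| := Finset.sum_nonneg fun _ _ => abs_nonneg _
  have h2 : (0:ℝ) ≤ Real.sqrt (P.2 (Fin.last d)) + Real.sqrt (Q.2 (Fin.last d)) +
      Real.sqrt (∑ i : Fin d, |P.2 i.castSucc - Q.2 i.castSucc|) := by positivity
  positivity

lemma sum_abs_update (d : ℕ) (x : Fin (d + 1) → ℝ) (i : Fin (d + 1)) (y : ℝ) :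
    ∑ j, |Function.update x i y j - x j| = |y - x i| := by
  rw [Finset.sum_eq_single i]
  · simp
  · intro j _ hj
    simp [Function.update_of_ne hj]
  · simp

lemma cyc_update (d : ℕ) (i : Fin (d + 1)) (t : ℝ) (x : Fin (d + 1) → ℝ) (y : ℝ)
    (hx : 0 ≤ x (Fin.last d)) (hy : x i < y) :
    0 < cyc d (t, Function.update x i y) (t, x) ∧
      cyc d (t, Function.update x i y) (t, x) ≤ Real.sqrt (y - x i) := by
  unfold cyc
  simp only [sub_self, abs_zero, Real.sqrt_zero, add_zero]
  set D := Real.sqrt (Function.update x i y (Fin.last d)) + Real.sqrt (x (Fin.last d)) +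
    Real.sqrt (∑ k : Fin d, |Function.update x i y k.castSucc - x k.castSucc|) with hD
  have hnum : ∑ j, |Function.update x i y j - x j| = y - x i := by
    rw [sum_abs_update, abs_of_pos (by linarith)]
  have hpos : 0 < Real.sqrt (y - x i) := Real.sqrt_pos.2 (by linarith)
  have hDge : Real.sqrt (y - x i) ≤ D := by
    by_cases hi : i = Fin.last d
    · subst hi
      have h0 : Real.sqrt (y - x (Fin.last d)) ≤
          Real.sqrt (Function.update x (Fin.last d) y (Fin.last d)) := by
        rw [Function.update_self]
        exact Real.sqrt_le_sqrt (by linarith)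
      have h2 : (0:ℝ) ≤ Real.sqrt (x (Fin.last d)) := Real.sqrt_nonneg _
      have h3 : (0:ℝ) ≤ Real.sqrt
          (∑ k : Fin d, |Function.update x (Fin.last d) y k.castSucc - x k.castSucc|) :=
        Real.sqrt_nonneg _
      rw [hD]; linarith
    · obtain ⟨k0, rfl⟩ := Fin.exists_castSucc_eq.mpr hi
      have hsum : ∑ k : Fin d, |Function.update x k0.castSucc y k.castSucc - x k.castSucc|
          = y - x k0.castSucc := by
        rw [Finset.sum_eq_single k0]
        · rw [Function.update_self, abs_of_pos (by linarith)]
        · intro j _ hj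
          rw [Function.update_of_ne (by simpa using (Fin.castSucc_injective d).ne hj)]
          simp
        · simp
      have h1 : (0:ℝ) ≤ Real.sqrt (Function.update x k0.castSucc y (Fin.last d)) :=
        Real.sqrt_nonneg _
      have h2 : (0:ℝ) ≤ Real.sqrt (x (Fin.last d)) := Real.sqrt_nonneg _
      rw [hD, hsum]; linarith
  refine ⟨div_pos (by rw [hnum]; linarith) (by linarith), ?_⟩
  have step1 : (∑ j, |Function.update x i y j - x j|) / D ≤ (y - x i) / Real.sqrt (y - x i) := by
    rw [hnum]
    exact div_le_div_of_nonneg_left (by linarith) hpos hDge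
  calc (∑ j, |Function.update x i y j - x j|) / D
      ≤ (y - x i) / Real.sqrt (y - x i) := step1
    _ = Real.sqrt (y - x i) := Real.div_sqrt

lemma supN_nonneg (d : ℕ) (S : Set (ℝ × (Fin (d + 1) → ℝ))) (f : ℝ × (Fin (d + 1) → ℝ) → ℝ) :
    0 ≤ supN d S f :=
  Real.sSup_nonneg fun x hx => by obtain ⟨P, _, rfl⟩ := hx; exact abs_nonneg _

lemma semiS_nonneg (d : ℕ) (α : ℝ) (S : Set (ℝ × (Fin (d + 1) → ℝ)))
    (f : ℝ × (Fin (d + 1) → ℝ) → ℝ) : 0 ≤ semiS d α S f :=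
  Real.sSup_nonneg fun x hx => by
    obtain ⟨PQ, _, rfl⟩ := hx
    exact div_nonneg (abs_nonneg _) (Real.rpow_nonneg (cyc_nonneg _ _ _) _)

lemma holderS_nonneg (d : ℕ) (α : ℝ) (S : Set (ℝ × (Fin (d + 1) → ℝ)))
    (f : ℝ × (Fin (d + 1) → ℝ) → ℝ) : 0 ≤ holderS d α S f :=
  add_nonneg (supN_nonneg d S f) (semiS_nonneg d α S f)

lemma semiS_le_norm2S (d : ℕ) (α : ℝ) (S : Set (ℝ × (Fin (d + 1) → ℝ)))
    (u ut : ℝ × (Fin (d + 1) → ℝ) → ℝ)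
    (ux : Fin (d + 1) → ℝ × (Fin (d + 1) → ℝ) → ℝ)
    (uxx : Fin (d + 1) → Fin (d + 1) → ℝ × (Fin (d + 1) → ℝ) → ℝ) (i : Fin (d + 1)) :
    semiS d α S (ux i) ≤ norm2S d α S u ut ux uxx := by
  unfold norm2S
  have h1 : semiS d α S (ux i) ≤ ⨆ j, holderS d α S (ux j) := by
    refine le_trans ?_ (le_ciSup (Set.Finite.bddAbove (Set.finite_range _)) i)
    have := supN_nonneg d S (ux i)
    unfold holderS; linarith
  have h2 : (0:ℝ) ≤ ⨆ i, ⨆ j, holderS d α S (fun P => P.2 (Fin.last d) * uxx i j P) := by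
    have h2a : holderS d α S (fun P => P.2 (Fin.last d) * uxx 0 0 P) ≤
        ⨆ j, holderS d α S (fun P => P.2 (Fin.last d) * uxx 0 j P) :=
      le_ciSup (f := fun j => holderS d α S (fun P => P.2 (Fin.last d) * uxx 0 j P))
        (Set.Finite.bddAbove (Set.finite_range _)) (0 : Fin (d+1))
    have h2b : (⨆ j, holderS d α S (fun P => P.2 (Fin.last d) * uxx 0 j P)) ≤
        ⨆ i, ⨆ j, holderS d α S (fun P => P.2 (Fin.last d) * uxx i j P) :=
      le_ciSup (f := fun i => ⨆ j, holderS d α S (fun P => P.2 (Fin.last d) * uxx i j P))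
        (Set.Finite.bddAbove (Set.finite_range _)) (0 : Fin (d+1))
    exact le_trans (holderS_nonneg d α S _) (le_trans h2a h2b)
  have h3 := holderS_nonneg d α S u
  have h4 := holderS_nonneg d α S ut
  linarith

lemma norm2S_nonneg (d : ℕ) (α : ℝ) (S : Set (ℝ × (Fin (d + 1) → ℝ)))
    (u ut : ℝ × (Fin (d + 1) → ℝ) → ℝ)
    (ux : Fin (d + 1) → ℝ × (Fin (d + 1) → ℝ) → ℝ)
    (uxx : Fin (d + 1) → Fin (d + 1) → ℝ × (Fin (d + 1) → ℝ) → ℝ) :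
    0 ≤ norm2S d α S u ut ux uxx :=
  le_trans (semiS_nonneg d α S (ux 0)) (semiS_le_norm2S d α S u ut ux uxx 0)

end Aux
/-- Interpolation inequality (ii): under the same hypotheses, for every `ε ∈ (0,1)`
and each `1 ≤ i ≤ d`, `‖u_{x_i}‖_C ≤ ε ‖u‖_{C^{2+α}_s} + C ε^{-m} ‖u‖_C`,
with `m = m(d,α) > 0` and `C = C(T,R,d,α) > 0`. -/
theorem interpolation_first_deriv_sup (d : ℕ) (hd : 1 ≤ d) (α : ℝ)
    (hα : α ∈ Set.Ioo (0 : ℝ) 1) :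
    ∃ m : ℝ, 0 < m ∧ ∀ T R : ℝ, 0 < T → 0 < R →
      ∃ C : ℝ, 0 < C ∧
        ∀ (u ut : ℝ × (Fin (d + 1) → ℝ) → ℝ)
          (ux : Fin (d + 1) → ℝ × (Fin (d + 1) → ℝ) → ℝ)
          (uxx : Fin (d + 1) → Fin (d + 1) → ℝ × (Fin (d + 1) → ℝ) → ℝ)
          (x0 : Fin (d + 1) → ℝ),
          x0 (Fin.last d) = 0 →
          SuppBall d R x0 u →
          IsDerivs d T u ut ux uxx →
          FinNorm2 d α (domT d T) u ut ux uxx →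
          ∀ ε ∈ Set.Ioo (0 : ℝ) 1, ∀ i : Fin (d + 1),
            supN d (domT d T) (ux i) ≤
              ε * norm2S d α (domT d T) u ut ux uxx +
                C * ε ^ (-m) * supN d (domT d T) u := by
  obtain ⟨hα0, hα1⟩ := hα
  refine ⟨2 / α, by positivity, ?_⟩
  intro T R hT hR
  refine ⟨2, by norm_num, ?_⟩
  intro u ut ux uxx x0 hx0 hsupp hderiv hfin ε hε i
  obtain ⟨hε0, hε1⟩ := hε
  set S := domT d T with hS
  set h : ℝ := ε ^ (2 / α : ℝ) with hh
  have hh0 : 0 < h := Real.rpow_pos_of_pos hε0 _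
  set N := supN d S u with hN
  have hN0 : 0 ≤ N := supN_nonneg d S u
  set semi := semiS d α S (ux i) with hsemi
  have hsemi0 : 0 ≤ semi := semiS_nonneg d α S (ux i)
  have hkey : (Real.sqrt h) ^ α = ε := by
    rw [Real.sqrt_eq_rpow, hh, ← Real.rpow_mul hε0.le, ← Real.rpow_mul hε0.le,
      show 2 / α * (1 / 2) * α = 1 by field_simp, Real.rpow_one]
  have key : ∀ P ∈ S, |ux i P| ≤ ε * semi + 2 * ε ^ (-(2 / α)) * N := by
    rintro ⟨t, x⟩ hP
    obtain ⟨hPt, hPz⟩ := hP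
    set c := ux i (t, x) with hc
    have hQmem : ∀ y, x i ≤ y → (t, Function.update x i y) ∈ S := by
      intro y hy
      refine ⟨hPt, ?_⟩
      show 0 ≤ Function.update x i y (Fin.last d)
      by_cases hi : i = Fin.last d
      · subst hi
        rw [Function.update_self]
        exact le_trans hPz hy
      · rw [Function.update_of_ne (Ne.symm hi)]
        exact hPz
    have hsub : Set.Icc (x i) (x i + h) ⊆
        {s : ℝ | 0 ≤ Function.update x i s (Fin.last d)} := by
      intro s hs
      by_cases hi : i = Fin.last d
      · subst hi
        simp only [Set.mem_setOf_eq, Function.update_self]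
        have := hs.1
        linarith
      · simp only [Set.mem_setOf_eq, Function.update_of_ne (Ne.symm hi)]
        exact hPz
    have hg : ∀ y ∈ Set.Icc (x i) (x i + h),
        HasDerivWithinAt (fun s => u (t, Function.update x i s) - s * c)
          (ux i (t, Function.update x i y) - c) (Set.Icc (x i) (x i + h)) y := by
      intro y hy
      have hQ : (t, Function.update x i y) ∈ domT d T := hQmem y hy.1
      have hd := hderiv.2.1 _ hQ i
      simp only [Function.update_idem, Function.update_self] at hd
      exact (hd.mono hsub).sub ((hasDerivAt_mul_const c).hasDerivWithinAt)
    have hbound : ∀ y ∈ Set.Icc (x i) (x i + h),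
        ‖ux i (t, Function.update x i y) - c‖ ≤ semi * ε := by
      intro y hy
      rcases eq_or_lt_of_le hy.1 with heq | hlt
      · rw [← heq, Function.update_eq_self]
        simp only [hc, sub_self, norm_zero]
        exact mul_nonneg hsemi0 hε0.le
      · obtain ⟨hcycpos, hcycle⟩ := cyc_update d i t x y hPz hlt
        have hmem2 : ((t, Function.update x i y), (t, x)) ∈ S ×ˢ S :=
          ⟨hQmem y hlt.le, ⟨hPt, hPz⟩⟩
        have hle : |ux i (t, Function.update x i y) - ux i (t, x)| /
            (cyc d (t, Function.update x i y) (t, x)) ^ α ≤ semi :=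
          le_csSup (hfin.2.2.1 i).2 ⟨_, hmem2, rfl⟩
        have hcpow : 0 < (cyc d (t, Function.update x i y) (t, x)) ^ α :=
          Real.rpow_pos_of_pos hcycpos α
        have h1 : |ux i (t, Function.update x i y) - c| ≤
            semi * (cyc d (t, Function.update x i y) (t, x)) ^ α := by
          rw [hc]
          exact (div_le_iff₀ hcpow).mp hle
        have h2 : (cyc d (t, Function.update x i y) (t, x)) ^ α ≤ (Real.sqrt h) ^ α := by
          apply Real.rpow_le_rpow hcycpos.le ?_ hα0.le
          refine le_trans hcycle (Real.sqrt_le_sqrt ?_)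
          have := hy.2
          linarith
        rw [Real.norm_eq_abs]
        calc |ux i (t, Function.update x i y) - c|
            ≤ semi * (cyc d (t, Function.update x i y) (t, x)) ^ α := h1
          _ ≤ semi * (Real.sqrt h) ^ α := by
              exact mul_le_mul_of_nonneg_left h2 hsemi0
          _ = semi * ε := by rw [hkey]
    have hmvt := Convex.norm_image_sub_le_of_norm_hasDerivWithin_le hg hbound
      (convex_Icc _ _) (Set.left_mem_Icc.2 (by linarith))
      (Set.right_mem_Icc.2 (by linarith))
    have hA : |u (t, Function.update x i (x i + h))| ≤ N :=
      le_csSup hfin.1.1 ⟨_, hQmem _ (by linarith), rfl⟩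
    have hB : |u (t, x)| ≤ N := le_csSup hfin.1.1 ⟨(t, x), ⟨hPt, hPz⟩, rfl⟩
    rw [Function.update_eq_self, Real.norm_eq_abs, Real.norm_eq_abs,
      show x i + h - x i = h by ring] at hmvt
    rw [abs_of_pos hh0] at hmvt
    set A := u (t, Function.update x i (x i + h)) with hA'
    set B := u (t, x) with hB'
    have h3 : |A - (x i + h) * c - (B - x i * c)| = |A - B - h * c| := by
      congr 1
      ring
    rw [h3] at hmvt
    have h4 : |h * c| ≤ semi * ε * h + 2 * N := by
      have t1 : |h * c| ≤ |A - B| + |A - B - h * c| := by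
        have e : h * c = A - B - (A - B - h * c) := by ring
        calc |h * c| = |A - B - (A - B - h * c)| := by rw [← e]
          _ ≤ |A - B| + |A - B - h * c| := abs_sub _ _
      have t2 : |A - B| ≤ |A| + |B| := abs_sub _ _
      linarith
    rw [abs_mul, abs_of_pos hh0] at h4
    have h5 : |c| ≤ semi * ε + 2 * N / h := by
      rw [show semi * ε + 2 * N / h = (semi * ε * h + 2 * N) / h by field_simp,
        le_div_iff₀ hh0]
      nlinarith [h4]
    have h6 : 2 * N / h = 2 * ε ^ (-(2 / α)) * N := by
      rw [hh, Real.rpow_neg hε0.le]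
      field_simp
    calc |c| ≤ semi * ε + 2 * N / h := h5
      _ = ε * semi + 2 * ε ^ (-(2 / α)) * N := by rw [h6]; ring
  unfold supN
  refine Real.sSup_le ?_ ?_
  · rintro v ⟨P, hP, rfl⟩
    refine le_trans (key P hP) ?_
    have hle := semiS_le_norm2S d α S u ut ux uxx i
    have hmul := mul_le_mul_of_nonneg_left hle hε0.le
    linarith
  · have hn2 := norm2S_nonneg d α S u ut ux uxx
    have hr : (0:ℝ) ≤ ε ^ (-(2 / α)) := Real.rpow_nonneg hε0.le _
    nlinarith
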